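/- Let L be a Moufang loop, T ≤ L a subgroup generated by a set S, and u ∈ L with ((g₁g₂)u)² = 1 for all g₁,g₂ ∈ S ∪ {e}. Then uwu = w⁻¹ for every element w of T. -/

import Mathlib

/-- A Moufang loop: a loop (a quasigroup with two-sided identity) satisfying the
Moufang identities (m1) `z(x(yx)) = ((zx)y)x`, (m2) `x(y(xz)) = ((xy)x)z`,
(m3) `(xy)(zx) = x((yz)x)`. -/
class MoufangLoop (L : Type*) extends Mul L, One L where
  one_mul : ∀ a : L, 1 * a = a
  mul_one : ∀ a : L, a * 1 = a
  left_bij : ∀ a : L, Function.Bijective fun x : L => a * x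
  right_bij : ∀ a : L, Function.Bijective fun x : L => x * a
  m1 : ∀ x y z : L, z * (x * (y * x)) = ((z * x) * y) * x
  m2 : ∀ x y z : L, x * (y * (x * z)) = ((x * y) * x) * z
  m3 : ∀ x y z : L, (x * y) * (z * x) = x * ((y * z) * x)

/-- The subset `T` of the Moufang loop `L`, together with the inversion map `inv`,
forms a subgroup of `L`: it contains the identity, is closed under multiplication
and inversion, multiplication restricted to `T` is associative, and `inv` provides
two-sided inverses in `T`. -/
structure IsSubgroupOfLoop {L : Type*} [MoufangLoop L] (T : Set L) (inv : L → L) : Prop where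
  one_mem : (1 : L) ∈ T
  mul_mem : ∀ a ∈ T, ∀ b ∈ T, a * b ∈ T
  inv_mem : ∀ a ∈ T, inv a ∈ T
  assoc : ∀ a ∈ T, ∀ b ∈ T, ∀ c ∈ T, (a * b) * c = a * (b * c)
  mul_inv : ∀ a ∈ T, a * inv a = 1
  inv_mul : ∀ a ∈ T, inv a * a = 1

/-- `T` is generated (as a group) by the subset `S`: every element of `T` is an
iterated product of elements of `S` and their inverses. -/
def GeneratedBy {L : Type*} [MoufangLoop L] (T : Set L) (inv : L → L) (S : Set L) : Prop :=
  S ⊆ T ∧ ∀ w ∈ T, ∃ l : List L,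
    (∀ x ∈ l, x ∈ S ∨ ∃ s ∈ S, x = inv s) ∧ w = l.foldr (· * ·) 1

namespace MoufangAux

variable {L : Type*} [MoufangLoop L]

lemma lcan (a : L) {x y : L} (h : a * x = a * y) : x = y :=
  (MoufangLoop.left_bij a).1 h

lemma rcan (a : L) {x y : L} (h : x * a = y * a) : x = y :=
  (MoufangLoop.right_bij a).1 h

/-- left alternative law -/
lemma lalt (a b : L) : a * (a * b) = (a * a) * b := by
  have h := MoufangLoop.m2 a 1 b
  rwa [MoufangLoop.one_mul, MoufangLoop.mul_one] at h

/-- right alternative law -/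
lemma ralt (a b : L) : (b * a) * a = b * (a * a) := by
  have h := MoufangLoop.m1 a 1 b
  rw [MoufangLoop.one_mul, MoufangLoop.mul_one] at h
  exact h.symm

/-- flexible law -/
lemma flex (a b : L) : (a * b) * a = a * (b * a) := by
  have h := MoufangLoop.m3 a b 1
  rwa [MoufangLoop.one_mul, MoufangLoop.mul_one] at h

section Involution

lemma tt_l {t : L} (ht : t * t = 1) (a : L) : t * (t * a) = a := by
  rw [lalt, ht, MoufangLoop.one_mul]

lemma tt_r {t : L} (ht : t * t = 1) (a : L) : (a * t) * t = a := by
  rw [ralt, ht, MoufangLoop.mul_one]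

lemma II {t : L} (ht : t * t = 1) (a b : L) : t * (a * b) = ((t * a) * t) * (t * b) := by
  have h := MoufangLoop.m2 t a (t * b)
  rwa [tt_l ht b] at h

lemma III {t : L} (ht : t * t = 1) (a b : L) : (a * b) * t = (a * t) * (t * (b * t)) := by
  have h := MoufangLoop.m1 t b (a * t)
  rw [tt_r ht] at h
  exact h.symm

lemma at_eq {t : L} (ht : t * t = 1) (a : L) : a * t = t * ((t * a) * t) := by
  have h : t * ((t * a) * t) = a * t := by rw [flex t a, tt_l ht]
  exact h.symm

lemma au_mul {t : L} (ht : t * t = 1) (a c : L) : (a * t) * c = (a * ((t * c) * t)) * t := by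
  have h := III ht a ((t * c) * t)
  rw [tt_r ht, tt_l ht] at h
  exact h.symm

end Involution

section Subgroup

variable {T : Set L} {inv : L → L}

lemma lcan_inv (hT : IsSubgroupOfLoop T inv) {a : L} (ha : a ∈ T) (b : L) : a * (inv a * b) = b := by
  have h := MoufangLoop.m2 (inv a) a b
  rw [hT.inv_mul a ha, MoufangLoop.one_mul] at h
  exact lcan (inv a) h

lemma rcan_inv (hT : IsSubgroupOfLoop T inv) {a : L} (ha : a ∈ T) (b : L) : ((b * a) * inv a) = b := by
  have h := MoufangLoop.m1 a (inv a) b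
  rw [hT.inv_mul a ha, MoufangLoop.mul_one] at h
  exact rcan a h.symm

lemma inv_inv' (hT : IsSubgroupOfLoop T inv) {a : L} (ha : a ∈ T) : inv (inv a) = a :=
  lcan (inv a) (by rw [hT.mul_inv (inv a) (hT.inv_mem a ha), hT.inv_mul a ha])

lemma inv_one' (hT : IsSubgroupOfLoop T inv) : inv (1 : L) = 1 := by
  have h := hT.mul_inv 1 hT.one_mem
  rwa [MoufangLoop.one_mul] at h

lemma inv_anti (hT : IsSubgroupOfLoop T inv) {a b : L} (ha : a ∈ T) (hb : b ∈ T) : inv (a * b) = inv b * inv a := by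
  have hab := hT.mul_mem a ha b hb
  apply lcan (a * b)
  rw [hT.mul_inv _ hab,
    hT.assoc a ha b hb _ (hT.mul_mem _ (hT.inv_mem b hb) _ (hT.inv_mem a ha)),
    lcan_inv hT hb (inv a), hT.mul_inv a ha]

section WithU

/-- From `Q a`, `u * a = inv a * u`. -/
lemma q_ua {u : L} (hu : u * u = 1) {a : L} (qa : (u * a) * u = inv a) : u * a = inv a * u := by
  rw [← qa, tt_r hu]

/-- From `Q a`, `a * u = u * inv a`. -/
lemma q_au {u : L} (hu : u * u = 1) {a : L} (qa : (u * a) * u = inv a) : a * u = u * inv a := by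
  rw [← qa]; exact at_eq hu a

/-- `Q` is closed under inversion. -/
lemma Qinv (hT : IsSubgroupOfLoop T inv) {u : L} (hu : u * u = 1) {a : L} (ha : a ∈ T) (qa : (u * a) * u = inv a) :
    (u * inv a) * u = inv (inv a) := by
  rw [inv_inv' hT ha, ← qa, ← at_eq hu a, tt_r hu]

/-- Criterion, forward direction: `Q (a*b)` gives the anticommutation of `a` across `u*b`. -/
lemma K1f (hT : IsSubgroupOfLoop T inv) {u : L} (hu : u * u = 1) {a b : L} (ha : a ∈ T) (hb : b ∈ T)
    (qa : (u * a) * u = inv a) (qb : (u * b) * u = inv b)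
    (qab : (u * (a * b)) * u = inv (a * b)) :
    inv a * (u * b) = (u * b) * a := by
  have qia := Qinv hT hu ha qa
  calc inv a * (u * b) = ((u * a) * u) * (u * b) := by rw [qa]
    _ = u * (a * b) := (II hu a b).symm
    _ = inv (a * b) * u := q_ua hu qab
    _ = (inv b * inv a) * u := by rw [inv_anti hT ha hb]
    _ = (inv b * u) * (u * (inv a * u)) := III hu (inv b) (inv a)
    _ = (inv b * u) * ((u * inv a) * u) := by rw [← flex u (inv a)]
    _ = (inv b * u) * inv (inv a) := by rw [qia]
    _ = (inv b * u) * a := by rw [inv_inv' hT ha]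
    _ = (u * b) * a := by rw [← q_ua hu qb]

/-- Criterion, backward direction. -/
lemma K1b (hT : IsSubgroupOfLoop T inv) {u : L} (hu : u * u = 1) {a b : L} (ha : a ∈ T) (hb : b ∈ T)
    (qa : (u * a) * u = inv a) (qb : (u * b) * u = inv b)
    (crit : inv a * (u * b) = (u * b) * a) :
    (u * (a * b)) * u = inv (a * b) := by
  have h1 : u * (a * b) = inv (a * b) * u :=
    calc u * (a * b) = ((u * a) * u) * (u * b) := II hu a b
      _ = inv a * (u * b) := by rw [qa]
      _ = (u * b) * a := crit
      _ = (inv b * u) * a := by rw [q_ua hu qb]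
      _ = (inv b * ((u * a) * u)) * u := au_mul hu (inv b) a
      _ = (inv b * inv a) * u := by rw [qa]
      _ = inv (a * b) * u := by rw [← inv_anti hT ha hb]
  rw [h1, tt_r hu]

/-- Symmetry of anticommutation. -/
lemma K2 (hT : IsSubgroupOfLoop T inv) {a W : L} (ha : a ∈ T) (h : inv a * W = W * a) : a * W = W * inv a := by
  have h1 : a * (W * a) = W := by rw [← h]; exact lcan_inv hT ha W
  have h2 : (a * W) * a = W := by rw [flex a W]; exact h1
  have h3 := rcan_inv hT ha (a * W)
  rw [h2] at h3
  exact h3.symm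

/-- Flip the first factor: from `Q a, Q b, Q (a*b)` deduce `Q (inv a * b)`. -/
lemma Qflip1 (hT : IsSubgroupOfLoop T inv) {u : L} (hu : u * u = 1) {a b : L} (ha : a ∈ T) (hb : b ∈ T)
    (qa : (u * a) * u = inv a) (qb : (u * b) * u = inv b)
    (qab : (u * (a * b)) * u = inv (a * b)) :
    (u * (inv a * b)) * u = inv (inv a * b) := by
  apply K1b hT hu (hT.inv_mem a ha) hb (Qinv hT hu ha qa) qb
  rw [inv_inv' hT ha]
  exact K2 hT ha (K1f hT hu ha hb qa qb qab)

/-- Flip the second factor: from `Q a, Q b, Q (a*b)` deduce `Q (a * inv b)`. -/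
lemma Qflip2 (hT : IsSubgroupOfLoop T inv) {u : L} (hu : u * u = 1) {a b : L} (ha : a ∈ T) (hb : b ∈ T)
    (qa : (u * a) * u = inv a) (qb : (u * b) * u = inv b)
    (qab : (u * (a * b)) * u = inv (a * b)) :
    (u * (a * inv b)) * u = inv (a * inv b) := by
  have h1 : (u * (inv b * inv a)) * u = inv (inv b * inv a) := by
    have h := Qinv hT hu (hT.mul_mem a ha b hb) qab
    rwa [inv_anti hT ha hb] at h
  have h2 := Qflip1 hT hu (hT.inv_mem b hb) (hT.inv_mem a ha)
    (Qinv hT hu hb qb) (Qinv hT hu ha qa) h1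
  rw [inv_inv' hT hb] at h2
  have h3 := Qinv hT hu (hT.mul_mem b hb (inv a) (hT.inv_mem a ha)) h2
  have h4 : inv (b * inv a) = a * inv b := by
    rw [inv_anti hT hb (hT.inv_mem a ha), inv_inv' hT ha]
  rwa [h4] at h3

/-- The key step lemma. -/
lemma STEP (hT : IsSubgroupOfLoop T inv) {u : L} (hu : u * u = 1) {x y z : L} (hx : x ∈ T) (hy : y ∈ T) (hz : z ∈ T)
    (qx : (u * x) * u = inv x) (qy : (u * y) * u = inv y) (qz : (u * z) * u = inv z)
    (qxy : (u * (x * y)) * u = inv (x * y))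
    (qyz : (u * (y * z)) * u = inv (y * z))
    (qixz : (u * (inv x * z)) * u = inv (inv x * z)) :
    (u * (x * (y * z))) * u = inv (x * (y * z)) := by
  have ht : (u * z) * (u * z) = 1 := by
    nth_rewrite 2 [q_ua hu qz]
    have h := MoufangLoop.m3 u z (inv z)
    rw [hT.mul_inv z hz, MoufangLoop.one_mul] at h
    rw [h, hu]
  have hA : inv y * (u * z) = (u * z) * y := K1f hT hu hy hz qy qz qyz
  have hBpre : inv (inv x) * (u * z) = (u * z) * inv x :=
    K1f hT hu (hT.inv_mem x hx) hz (Qinv hT hu hx qx) qz qixz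
  have hB' : inv x * (u * z) = (u * z) * x := by
    have h := K2 hT (hT.inv_mem x hx) hBpre
    rwa [inv_inv' hT hx] at h
  have phitx : ((u * z) * x) * (u * z) = inv x := by
    rw [← hB', tt_r ht]
  have e1 : u * (y * z) = (u * z) * y := by
    rw [II hu y z, qy]; exact hA
  have e2 : u * (x * (y * z)) = (u * z) * (x * y) := by
    rw [II hu x (y * z), qx, e1, ← phitx]
    exact (II ht x y).symm
  have e3 : (u * z) * (x * y) = (inv z * (inv y * inv x)) * u := by
    rw [q_ua hu qz, au_mul hu (inv z) (x * y), qxy, inv_anti hT hx hy]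
  rw [e2.trans e3, tt_r hu, inv_anti hT hx (hT.mul_mem y hy z hz), inv_anti hT hy hz,
    hT.assoc (inv z) (hT.inv_mem z hz) (inv y) (hT.inv_mem y hy) (inv x) (hT.inv_mem x hx)]

end WithU

end Subgroup

end MoufangAux

/-- Lemma 2.5: if `L` is a Moufang loop, `T ≤ L` a subgroup generated by `S`, and
`u ∈ L` satisfies `((g₁g₂)u)² = 1` for all `g₁, g₂ ∈ S ∪ {e}`, then `uwu = w⁻¹`
for every `w ∈ T`. -/
theorem conjugation_by_u {L : Type*} [MoufangLoop L]
    (T : Set L) (inv : L → L) (S : Set L) (u : L)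
    (hT : IsSubgroupOfLoop T inv) (hgen : GeneratedBy T inv S)
    (hu : ∀ g₁ ∈ insert (1 : L) S, ∀ g₂ ∈ insert (1 : L) S,
      ((g₁ * g₂) * u) * ((g₁ * g₂) * u) = 1) :
    ∀ w ∈ T, (u * w) * u = inv w := by
  open MoufangAux in
  have hu1 : u * u = 1 := by
    have h := hu 1 (Set.mem_insert 1 S) 1 (Set.mem_insert 1 S)
    rwa [MoufangLoop.one_mul, MoufangLoop.one_mul] at h
  -- convert the "square one" hypothesis to the `Q` form
  have from_sq : ∀ a ∈ T, (a * u) * (a * u) = 1 → (u * a) * u = inv a := by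
    intro a ha h
    have h1 : a * u = u * ((u * a) * u) := MoufangAux.at_eq hu1 a
    have h3 : (u * ((u * a) * u)) * (a * u) = 1 := by rw [← h1]; exact h
    have h4 := MoufangLoop.m3 u ((u * a) * u) a
    rw [h4] at h3
    have h5 : (((u * a) * u) * a) * u = u := MoufangAux.lcan u (h3.trans hu1.symm)
    have h6 : ((u * a) * u) * a = 1 :=
      MoufangAux.rcan u (by rw [h5, MoufangLoop.one_mul])
    exact MoufangAux.rcan a (h6.trans (hT.inv_mul a ha).symm)
  have memT : ∀ g ∈ insert (1 : L) S, g ∈ T := by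
    intro g hg
    rcases hg with rfl | hg
    · exact hT.one_mem
    · exact hgen.1 hg
  have qpair0 : ∀ g₁ ∈ insert (1 : L) S, ∀ g₂ ∈ insert (1 : L) S,
      (u * (g₁ * g₂)) * u = inv (g₁ * g₂) := by
    intro g₁ h₁ g₂ h₂
    exact from_sq _ (hT.mul_mem _ (memT g₁ h₁) _ (memT g₂ h₂)) (hu g₁ h₁ g₂ h₂)
  have qg0 : ∀ g ∈ insert (1 : L) S, (u * g) * u = inv g := by
    intro g hg
    have h := qpair0 g hg 1 (Set.mem_insert 1 S)
    rwa [MoufangLoop.mul_one] at h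
  -- "good" letters: 1, generators, or inverses of generators
  set good : L → Prop := fun g => g ∈ insert (1 : L) S ∨ ∃ s ∈ S, g = inv s with hgood
  have gT : ∀ g, good g → g ∈ T := by
    intro g hg
    rcases hg with hg | ⟨s, hs, rfl⟩
    · exact memT g hg
    · exact hT.inv_mem s (hgen.1 hs)
  have gQ : ∀ g, good g → (u * g) * u = inv g := by
    intro g hg
    rcases hg with hg | ⟨s, hs, rfl⟩
    · exact qg0 g hg
    · exact MoufangAux.Qinv hT hu1 (hgen.1 hs) (qg0 s (Set.mem_insert_of_mem 1 hs))
  have ginv : ∀ g, good g → good (inv g) := by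
    intro g hg
    rcases hg with hg | ⟨s, hs, rfl⟩
    · rcases hg with rfl | hg
      · left; rw [MoufangAux.inv_one' hT]; exact Set.mem_insert 1 S
      · right; exact ⟨g, hg, rfl⟩
    · left
      rw [MoufangAux.inv_inv' hT (hgen.1 hs)]
      exact Set.mem_insert_of_mem 1 hs
  -- all products of two good letters satisfy Q
  have gpair : ∀ g m, good g → good m → (u * (g * m)) * u = inv (g * m) := by
    intro g m hg hm
    rcases hg with hg | ⟨s₁, hs₁, rfl⟩ <;> rcases hm with hm | ⟨s₂, hs₂, rfl⟩
    · exact qpair0 g hg m hm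
    · exact MoufangAux.Qflip2 hT hu1 (memT g hg) (hgen.1 hs₂) (qg0 g hg)
        (qg0 s₂ (Set.mem_insert_of_mem 1 hs₂))
        (qpair0 g hg s₂ (Set.mem_insert_of_mem 1 hs₂))
    · exact MoufangAux.Qflip1 hT hu1 (hgen.1 hs₁) (memT m hm)
        (qg0 s₁ (Set.mem_insert_of_mem 1 hs₁)) (qg0 m hm)
        (qpair0 s₁ (Set.mem_insert_of_mem 1 hs₁) m hm)
    · have h := MoufangAux.Qinv hT hu1
        (hT.mul_mem s₂ (hgen.1 hs₂) s₁ (hgen.1 hs₁))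
        (qpair0 s₂ (Set.mem_insert_of_mem 1 hs₂) s₁ (Set.mem_insert_of_mem 1 hs₁))
      rwa [MoufangAux.inv_anti hT (hgen.1 hs₂) (hgen.1 hs₁)] at h
  -- words built from letters lie in T
  have foldr_mem : ∀ l : List L, (∀ x ∈ l, x ∈ S ∨ ∃ s ∈ S, x = inv s) →
      l.foldr (· * ·) 1 ∈ T := by
    intro l
    induction l with
    | nil => intro _; exact hT.one_mem
    | cons a l' ih =>
      intro hl
      have ha : a ∈ T := by
        rcases hl a List.mem_cons_self with h | ⟨s, hs, rfl⟩
        · exact hgen.1 h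
        · exact hT.inv_mem s (hgen.1 hs)
      simp only [List.foldr_cons]
      exact hT.mul_mem a ha _ (ih fun x hx => hl x (List.mem_cons_of_mem a hx))
  have goodLetter : ∀ (l : List L), (∀ x ∈ l, x ∈ S ∨ ∃ s ∈ S, x = inv s) →
      ∀ m ∈ l, good m := by
    intro l hl m hm
    rcases hl m hm with h | h
    · exact Or.inl (Set.mem_insert_of_mem 1 h)
    · exact Or.inr h
  -- main induction
  have main : ∀ l : List L, (∀ x ∈ l, x ∈ S ∨ ∃ s ∈ S, x = inv s) →
      ∀ g, good g →
      (u * (g * l.foldr (· * ·) 1)) * u = inv (g * l.foldr (· * ·) 1) := by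
    intro l
    induction l with
    | nil =>
      intro _ g hg
      simp only [List.foldr_nil]
      rw [MoufangLoop.mul_one]
      exact gQ g hg
    | cons m l' ih =>
      intro hl g hg
      have hm : good m := goodLetter _ hl m List.mem_cons_self
      have hl' : ∀ x ∈ l', x ∈ S ∨ ∃ s ∈ S, x = inv s :=
        fun x hx => hl x (List.mem_cons_of_mem m hx)
      have hv' : l'.foldr (· * ·) 1 ∈ T := foldr_mem l' hl'
      have qv' : (u * l'.foldr (· * ·) 1) * u = inv (l'.foldr (· * ·) 1) := by
        have h := ih hl' 1 (Or.inl (Set.mem_insert 1 S))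
        rwa [MoufangLoop.one_mul] at h
      have qmv' := ih hl' m hm
      have qgiv' := ih hl' (inv g) (ginv g hg)
      simp only [List.foldr_cons]
      exact MoufangAux.STEP hT hu1 (gT g hg) (gT m hm) hv'
        (gQ g hg) (gQ m hm) qv' (gpair g m hg hm) qmv' qgiv'
  intro w hw
  obtain ⟨l, hl, rfl⟩ := hgen.2 w hw
  have h := main l hl 1 (Or.inl (Set.mem_insert 1 S))
  rwa [MoufangLoop.one_mul] at h
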